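/- For all g ≥ 2, (X+1)·χ_g(X) = X^{2g+1} - 2X^{2g-1} - 2X^2 + 1, where χ_g is the characteristic polynomial of the 2g×2g matrix M_g defined in the context. -/

import Mathlib

open Polynomial Matrix

/-- The 2g×2g integer matrix `M_g` (rows and columns indexed from 0, corresponding to the
1-indexed description: m_{1,g}=2, m_{1,j}=1 for g+1≤j≤2g, m_{i,i+g-1}=1 for 2≤i≤g,
m_{i,i-g}=1 for g+1≤i≤2g-1, m_{2g,g}=m_{2g,2g}=1). -/
def Mmat (g : ℕ) : Matrix (Fin (2 * g)) (Fin (2 * g)) ℤ :=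
  Matrix.of fun i j =>
    if (i : ℕ) = 0 then
      (if (j : ℕ) = g - 1 then 2 else if g ≤ (j : ℕ) then 1 else 0)
    else if (i : ℕ) ≤ g - 1 then
      (if (j : ℕ) = (i : ℕ) + g - 1 then 1 else 0)
    else if (i : ℕ) ≤ 2 * g - 2 then
      (if (j : ℕ) + g = (i : ℕ) then 1 else 0)
    else
      (if (j : ℕ) = g - 1 ∨ (j : ℕ) = 2 * g - 1 then 1 else 0)

noncomputable section Stmt8Aux

/-- `apoly m = (X^(2m+2) - 2X^(2m) + 1)/(X^2-1)` -/
private def apoly : ℕ → ℤ[X]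
  | 0 => 1
  | (m+1) => X^2 * apoly m - 1

private lemma apoly_spec (m : ℕ) : (X^2 - 1) * apoly m = X^(2*m+2) - 2*X^(2*m) + 1 := by
  induction m with
  | zero => simp [apoly]; ring
  | succ m ih =>
    show (X^2 - 1) * (X^2 * apoly m - 1) = _
    linear_combination (X:ℤ[X])^2 * ih

private def tpoly (g : ℕ) : ℤ[X] := (1 - 2*X) + apoly (g-1) * (X^2 - X)

private lemma det_fromBlocks_neg_one {m : Type*} [DecidableEq m] [Fintype m]
    {R : Type*} [CommRing R] (A B D : Matrix m m R) :
    (fromBlocks A B (-1) D).det = (A * D + B).det := by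
  have hW : (fromBlocks (0 : Matrix m m R) (-1 : Matrix m m R) (1 : Matrix m m R)
      (0 : Matrix m m R)).det = 1 := by
    have h : (fromBlocks (1 : Matrix m m R) (1 : Matrix m m R) (0 : Matrix m m R)
          (1 : Matrix m m R)) * (fromBlocks 0 (-1) 1 0)
        * (fromBlocks (1 : Matrix m m R) (1 : Matrix m m R) (0 : Matrix m m R)
          (1 : Matrix m m R)) = fromBlocks 1 0 1 1 := by
      simp [fromBlocks_multiply, Matrix.mul_one, Matrix.one_mul]
    have := congrArg Matrix.det h
    rw [det_mul, det_mul, det_fromBlocks_zero₂₁, det_fromBlocks_zero₁₂] at this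
    simpa using this
  have h1 : (fromBlocks A B (-1) D) * (fromBlocks (1 : Matrix m m R) D (0 : Matrix m m R)
      (1 : Matrix m m R)) = fromBlocks A (A*D+B) (-1) 0 := by
    simp [fromBlocks_multiply, neg_one_mul]
  have h2 : (fromBlocks (1:Matrix m m R) A (0 : Matrix m m R) (1 : Matrix m m R))
      * (fromBlocks A (A*D+B) (-1) 0)
      = fromBlocks 0 (A*D+B) (-1) 0 := by
    simp [fromBlocks_multiply, mul_neg_one]
  have h3 : (fromBlocks (0:Matrix m m R) (A*D+B) (-1 : Matrix m m R) (0 : Matrix m m R))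
      * (fromBlocks (0 : Matrix m m R) (-1 : Matrix m m R) (1 : Matrix m m R) (0 : Matrix m m R))
      = fromBlocks (A*D+B) 0 0 1 := by
    simp [fromBlocks_multiply, neg_one_mul]
  have e1 := congrArg Matrix.det h1
  have e2 := congrArg Matrix.det h2
  have e3 := congrArg Matrix.det h3
  rw [det_mul, det_fromBlocks_zero₂₁] at e1 e2
  rw [det_mul, hW] at e3
  simp only [det_one, one_mul, mul_one] at e1 e2 e3
  rw [e1, e2, e3, det_fromBlocks_zero₂₁, det_one, mul_one]

private def eqv (g : ℕ) : Fin g ⊕ Fin g ≃ Fin (2 * g) :=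
  finSumFinEquiv.trans (finCongr (by omega))

private lemma eqv_inl (g : ℕ) (i : Fin g) : ((eqv g) (Sum.inl i) : ℕ) = i := by
  simp [eqv]

private lemma eqv_inr (g : ℕ) (i : Fin g) : ((eqv g) (Sum.inr i) : ℕ) = g + i := by
  simp [eqv]; omega

private def aA0 (g : ℕ) : Matrix (Fin g) (Fin g) ℤ :=
  Matrix.of fun i j => if (i:ℕ) = 0 ∧ (j:ℕ) = g - 1 then 2 else 0

private def aB0 (g : ℕ) : Matrix (Fin g) (Fin g) ℤ :=
  Matrix.of fun i j => if (i:ℕ) = 0 then 1 else if (j:ℕ) + 1 = (i:ℕ) then 1 else 0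

private def aD0 (g : ℕ) : Matrix (Fin g) (Fin g) ℤ :=
  Matrix.of fun i j => if (i:ℕ) = g - 1 ∧ (j:ℕ) = g - 1 then 1 else 0

private lemma Mmat_eq (g : ℕ) (hg : 2 ≤ g) :
    (Mmat g).submatrix (eqv g) (eqv g) = fromBlocks (aA0 g) (aB0 g) 1 (aD0 g) := by
  ext i j
  have key : ∀ x y : Fin (2*g), Mmat g x y =
      (if (x : ℕ) = 0 then
        (if (y : ℕ) = g - 1 then 2 else if g ≤ (y : ℕ) then 1 else 0)
      else if (x : ℕ) ≤ g - 1 then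
        (if (y : ℕ) = (x : ℕ) + g - 1 then 1 else 0)
      else if (x : ℕ) ≤ 2 * g - 2 then
        (if (y : ℕ) + g = (x : ℕ) then 1 else 0)
      else
        (if (y : ℕ) = g - 1 ∨ (y : ℕ) = 2 * g - 1 then 1 else 0)) := fun _ _ => rfl
  rcases i with i | i <;> rcases j with j | j <;>
    [ (have hi := i.isLt; have hj := j.isLt;
       simp only [submatrix_apply, key, eqv_inl, eqv_inr, fromBlocks_apply₁₁,
         aA0, of_apply]);
      (have hi := i.isLt; have hj := j.isLt;
       simp only [submatrix_apply, key, eqv_inl, eqv_inr, fromBlocks_apply₁₂,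
         aB0, of_apply]);
      (have hi := i.isLt; have hj := j.isLt;
       simp only [submatrix_apply, key, eqv_inl, eqv_inr, fromBlocks_apply₂₁,
         one_apply, Fin.ext_iff]);
      (have hi := i.isLt; have hj := j.isLt;
       simp only [submatrix_apply, key, eqv_inl, eqv_inr, fromBlocks_apply₂₂,
         aD0, of_apply])] <;>
    split_ifs <;> first | rfl | omega

private def aA (g : ℕ) : Matrix (Fin g) (Fin g) ℤ[X] :=
  Matrix.of fun i j => (if (i:ℕ) = (j:ℕ) then X else 0)
    - (if (i:ℕ) = 0 ∧ (j:ℕ) = g - 1 then 2 else 0)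

private def aB (g : ℕ) : Matrix (Fin g) (Fin g) ℤ[X] :=
  Matrix.of fun i j => -(if (i:ℕ) = 0 then 1 else if (j:ℕ) + 1 = (i:ℕ) then 1 else 0)

private def dfun (g : ℕ) : Fin g → ℤ[X] := fun j => if (j:ℕ) = g - 1 then X - 1 else X

private def aD (g : ℕ) : Matrix (Fin g) (Fin g) ℤ[X] := Matrix.diagonal (dfun g)

private lemma charm (g : ℕ) (hg : 2 ≤ g) :
    charmatrix (fromBlocks (aA0 g) (aB0 g) 1 (aD0 g)) =
      fromBlocks (aA g) (aB g) (-1) (aD g) := by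
  ext i j : 1
  rw [charmatrix_apply]
  rcases i with i | i <;> rcases j with j | j <;>
    have hi := i.isLt <;> have hj := j.isLt <;>
    simp only [diagonal_apply, fromBlocks_apply₁₁, fromBlocks_apply₁₂, fromBlocks_apply₂₁,
      fromBlocks_apply₂₂, aA0, aB0, aD0, aA, aB, aD, dfun, of_apply, Sum.inl.injEq,
      Sum.inr.injEq, neg_apply, one_apply, Matrix.diagonal_apply,
      reduceCtorEq, if_false, Fin.ext_iff, apply_ite (Polynomial.C (R := ℤ)),
      map_zero, _root_.map_one, map_ofNat] <;>
    split_ifs <;> first | rfl | omega | simp [one_apply, Fin.ext_iff, *] | simp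

private def aK (g : ℕ) : Matrix (Fin g) (Fin g) ℤ[X] :=
  Matrix.of fun i j =>
    if (i:ℕ) = 0 then
      (if (j:ℕ) = 0 then X^2 - 1 else if (j:ℕ) = g - 1 then 1 - 2*X else -1)
    else if (i:ℕ) = (j:ℕ) then (if (i:ℕ) = g - 1 then X^2 - X else X^2)
    else if (j:ℕ) + 1 = (i:ℕ) then -1 else 0

private lemma K_eq (g : ℕ) (hg : 2 ≤ g) : aA g * aD g + aB g = aK g := by
  refine Matrix.ext fun i j => ?_
  have hi := i.isLt; have hj := j.isLt
  rw [Matrix.add_apply, aD, Matrix.mul_diagonal]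
  simp only [aA, aB, aK, dfun, of_apply]
  split_ifs <;> first | ring1 | (exfalso; omega)

private def aL (g : ℕ) : Matrix (Fin g) (Fin g) ℤ[X] :=
  Matrix.of fun i k => if (i:ℕ) = 0 then apoly (k:ℕ) else if (i:ℕ) = (k:ℕ) then 1 else 0

private def aK' (g : ℕ) : Matrix (Fin g) (Fin g) ℤ[X] :=
  Matrix.of fun i j =>
    if (i:ℕ) = 0 then (if (j:ℕ) = g - 1 then tpoly g else 0)
    else if (i:ℕ) = (j:ℕ) then (if (i:ℕ) = g - 1 then X^2 - X else X^2)
    else if (j:ℕ) + 1 = (i:ℕ) then -1 else 0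

private lemma LK (k : ℕ) : aL (k+2) * aK (k+2) = aK' (k+2) := by
  have hg1 : (k+2) - 1 = k+1 := rfl
  refine Matrix.ext fun i j => ?_
  rw [Matrix.mul_apply]
  by_cases hi : (i:ℕ) = 0
  · have hj := j.isLt
    have hRHS : aK' (k+2) i j = (if (j:ℕ) = k+1 then tpoly (k+2) else 0) := by
      simp only [aK', of_apply, if_pos hi, hg1]
    rw [hRHS]
    by_cases hj0 : (j:ℕ) = 0
    · rw [if_neg (by omega)]
      have hsum : ∀ x : Fin (k+2), aL (k+2) i x * aK (k+2) x j =
          (if x = (⟨0, by omega⟩ : Fin (k+2)) then apoly (x:ℕ) * (X^2 - 1) else 0)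
          + (if x = (⟨1, by omega⟩ : Fin (k+2)) then apoly (x:ℕ) * (-1) else 0) := by
        intro x
        have hx := x.isLt
        simp only [aL, aK, of_apply, hi, hg1, Fin.ext_iff, Fin.val_mk]
        split_ifs <;> first | ring1 | (exfalso; omega)
      rw [Finset.sum_congr rfl fun x _ => hsum x, Finset.sum_add_distrib,
        Finset.sum_ite_eq', Finset.sum_ite_eq']
      simp only [Finset.mem_univ, if_true, Fin.val_mk]
      show apoly 0 * (X^2-1) + apoly 1 * (-1) = 0
      simp only [apoly]
      ring
    · by_cases hjl : (j:ℕ) = k+1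
      · rw [if_pos hjl]
        have hsum : ∀ x : Fin (k+2), aL (k+2) i x * aK (k+2) x j =
            (if x = (⟨0, by omega⟩ : Fin (k+2)) then apoly (x:ℕ) * (1 - 2*X) else 0)
            + (if x = j then apoly (x:ℕ) * (X^2 - X) else 0) := by
          intro x
          have hx := x.isLt
          simp only [aL, aK, of_apply, hi, hg1, Fin.ext_iff, Fin.val_mk]
          split_ifs <;> first | ring1 | (exfalso; omega)
        rw [Finset.sum_congr rfl fun x _ => hsum x, Finset.sum_add_distrib,
          Finset.sum_ite_eq', Finset.sum_ite_eq']
        simp only [Finset.mem_univ, if_true, Fin.val_mk, hjl]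
        show apoly 0 * (1-2*X) + apoly (k+1) * (X^2 - X) = tpoly (k+2)
        simp only [apoly, tpoly, hg1]
        ring
      · rw [if_neg hjl]
        have hjlt : (j:ℕ) + 1 < k + 2 := by omega
        have hsum : ∀ x : Fin (k+2), aL (k+2) i x * aK (k+2) x j =
            (if x = (⟨0, by omega⟩ : Fin (k+2)) then apoly (x:ℕ) * (-1) else 0)
            + ((if x = j then apoly (x:ℕ) * (X^2) else 0)
              + (if x = (⟨(j:ℕ)+1, hjlt⟩ : Fin (k+2)) then apoly (x:ℕ) * (-1) else 0)) := by
          intro x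
          have hx := x.isLt
          simp only [aL, aK, of_apply, hi, hg1, Fin.ext_iff, Fin.val_mk]
          split_ifs <;> first | ring1 | (exfalso; omega)
        rw [Finset.sum_congr rfl fun x _ => hsum x, Finset.sum_add_distrib,
          Finset.sum_add_distrib, Finset.sum_ite_eq', Finset.sum_ite_eq', Finset.sum_ite_eq']
        simp only [Finset.mem_univ, if_true, Fin.val_mk]
        show apoly 0 * (-1) + (apoly (j:ℕ) * (X^2) + apoly ((j:ℕ)+1) * (-1)) = 0
        simp only [apoly]
        ring
  · have hsum : ∀ x : Fin (k+2), aL (k+2) i x * aK (k+2) x j =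
        (if x = i then aK (k+2) x j else 0) := by
      intro x
      simp only [aL, of_apply, if_neg hi]
      by_cases h : (i:ℕ) = (x:ℕ)
      · rw [if_pos h, if_pos (Fin.ext h.symm), one_mul]
      · rw [if_neg h, if_neg (fun hc => h (congrArg Fin.val hc).symm), zero_mul]
    rw [Finset.sum_congr rfl fun x _ => hsum x, Finset.sum_ite_eq']
    simp only [Finset.mem_univ, if_true]
    simp only [aK, aK', of_apply, if_neg hi]

private lemma detL (k : ℕ) : (aL (k+2)).det = 1 := by
  have htri : (aL (k+2)).BlockTriangular id := by
    intro i j hij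
    have h1 : (j:ℕ) < (i:ℕ) := hij
    simp only [aL, of_apply]
    rw [if_neg (by omega), if_neg (by omega)]
  rw [Matrix.det_of_upperTriangular htri]
  apply Finset.prod_eq_one
  intro i _
  by_cases h : (i:ℕ) = 0
  · simp [aL, h, apoly]
  · simp [aL, h]; intro h'; simp [h'] at h

private lemma detK' (k : ℕ) : (aK' (k+2)).det = tpoly (k+2) := by
  rw [Matrix.det_succ_row_zero]
  rw [Finset.sum_eq_single (Fin.last (k+1))]
  · have h0 : aK' (k+2) 0 (Fin.last (k+1)) = tpoly (k+2) := by
      simp [aK', Fin.last]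
    rw [h0, Fin.succAbove_last]
    have htri : ((aK' (k+2)).submatrix Fin.succ Fin.castSucc).BlockTriangular id := by
      intro a b hab
      have h1 : (b:ℕ) < (a:ℕ) := hab
      simp only [Matrix.submatrix_apply, aK', of_apply, Fin.val_succ, Fin.coe_castSucc]
      rw [if_neg (by omega), if_neg (by omega), if_neg (by omega)]
    rw [Matrix.det_of_upperTriangular htri]
    have hdiag : ∀ a : Fin (k+1),
        ((aK' (k+2)).submatrix Fin.succ Fin.castSucc) a a = -1 := by
      intro a
      simp only [Matrix.submatrix_apply, aK', of_apply, Fin.val_succ, Fin.coe_castSucc]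
      rw [if_neg (by omega), if_neg (by omega)]
      simp
    rw [Finset.prod_congr rfl fun a _ => hdiag a, Finset.prod_const,
      Finset.card_univ, Fintype.card_fin, Fin.val_last]
    have hsq : ((-1 : ℤ[X]))^(k+1) * ((-1 : ℤ[X]))^(k+1) = 1 := by
      rw [← pow_add]
      exact Even.neg_one_pow ⟨k+1, by ring⟩
    rw [mul_right_comm, hsq, one_mul]
  · intro b _ hb
    have hb' : (b:ℕ) ≠ k+1 := by
      intro hc
      exact hb (Fin.ext (by rw [hc, Fin.val_last]))
    have h0 : aK' (k+2) 0 b = 0 := by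
      have hg1 : (k+2) - 1 = k+1 := rfl
      simp [aK', hg1, hb']
    rw [h0, mul_zero, zero_mul]
  · intro h
    exact absurd (Finset.mem_univ _) h

end Stmt8Aux

theorem stmt_8 (g : ℕ) (hg : 2 ≤ g) :
    (Polynomial.X + 1) * (Mmat g).charpoly =
      Polynomial.X ^ (2 * g + 1) - 2 * Polynomial.X ^ (2 * g - 1)
        - 2 * Polynomial.X ^ 2 + 1 := by
  obtain ⟨k, rfl⟩ : ∃ k, g = k + 2 := ⟨g - 2, by omega⟩
  have hg' : 2 ≤ k + 2 := by omega
  have hchar : (Mmat (k+2)).charpoly = tpoly (k+2) := by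
    have h2 := Matrix.charpoly_reindex (R := ℤ) (eqv (k+2)).symm (Mmat (k+2))
    rw [Matrix.reindex_apply, Equiv.symm_symm] at h2
    rw [← h2, Mmat_eq _ hg']
    show (charmatrix _).det = _
    rw [charm _ hg', det_fromBlocks_neg_one, K_eq _ hg']
    have e1 := Matrix.det_mul (aL (k+2)) (aK (k+2))
    rw [LK, detL, one_mul] at e1
    rw [← e1, detK']
  rw [hchar]
  have hexp : 2 * (k+2) - 1 = 2*k+3 := by omega
  rw [hexp]
  show (X + 1) * ((1 - 2*X) + apoly ((k+2)-1) * (X^2 - X)) = _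
  have hg1 : (k+2) - 1 = k+1 := rfl
  rw [hg1]
  linear_combination (X : ℤ[X]) * apoly_spec (k+1)
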